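/- arXiv:0802.2676 — 2 statements merged into one kernel-verified Lean document; each statement's English description precedes it below -/
import Mathlib

section
/- If A is symmetric positive definite and B is symmetric positive semidefinite with det(A + B) = det(A), then B = 0. -/
open Matrix

/-- If `A` is symmetric positive definite and `B` is symmetric positive semidefinite with
`det (A + B) = det A`, then `B = 0`. -/
theorem posSemidef_eq_zero_of_det_add_eq {d : ℕ} (A B : Matrix (Fin d) (Fin d) ℝ)
    (hA : A.PosDef) (hB : B.PosSemidef) (hdet : (A + B).det = A.det) : B = 0 := by
  classical
  set S := (open scoped MatrixOrder in CFC.sqrt A) with hSdef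
  have hS : S.PosSemidef := by
    open scoped MatrixOrder in exact Matrix.nonneg_iff_posSemidef.mp (CFC.sqrt_nonneg A)
  have hSS : S * S = A := by
    open scoped MatrixOrder in exact CFC.sqrt_mul_sqrt_self A hA.posSemidef.nonneg
  have hdetS : S.det ≠ 0 := by
    intro h0
    have : A.det = 0 := by rw [← hSS, det_mul, h0, zero_mul]
    exact (ne_of_gt hA.det_pos) this
  have hdetSu : IsUnit S.det := isUnit_iff_ne_zero.mpr hdetS
  have hSinv : S * S⁻¹ = 1 := mul_nonsing_inv _ hdetSu
  have hSinv' : S⁻¹ * S = 1 := nonsing_inv_mul _ hdetSu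
  set C := S⁻¹ * B * S⁻¹ with hCdef
  have hC : C.PosSemidef := by
    have h := hB.conjTranspose_mul_mul_same S⁻¹
    have hH : (S⁻¹)ᴴ = S⁻¹ := by
      rw [conjTranspose_nonsing_inv, hS.1]
    rwa [hH] at h
  have hconj : S * C * S = B := by
    rw [hCdef]
    simp only [← Matrix.mul_assoc]
    rw [hSinv, one_mul, Matrix.mul_assoc, hSinv', Matrix.mul_one]
  have hfact : S * (1 + C) * S = A + B := by
    rw [mul_add, add_mul, mul_one, hSS, hconj]
  have h1 : S.det * (1 + C).det * S.det = S.det * S.det := by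
    rw [← det_mul, ← det_mul, hfact, hdet, ← hSS, det_mul]
  have h2 : S.det * (1 + C).det = S.det := mul_right_cancel₀ hdetS h1
  have hdet1 : (1 + C).det = 1 :=
    mul_left_cancel₀ hdetS (by rw [h2, mul_one])
  set μ := hC.1.eigenvalues with hμdef
  set U : Matrix (Fin d) (Fin d) ℝ := (hC.1.eigenvectorUnitary : Matrix (Fin d) (Fin d) ℝ)
    with hUdef
  have hUU : U * star U = 1 := (Matrix.mem_unitaryGroup_iff).mp hC.1.eigenvectorUnitary.2
  have hUU' : star U * U = 1 := (Matrix.mem_unitaryGroup_iff').mp hC.1.eigenvectorUnitary.2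
  have hCspec : C = U * diagonal (RCLike.ofReal ∘ μ) * star U := hC.1.spectral_theorem
  have key : 1 + C = U * (1 + diagonal (RCLike.ofReal ∘ μ)) * star U := by
    rw [mul_add, add_mul, mul_one, hUU, ← hCspec]
  have hprod : ∏ i, (1 + μ i) = 1 := by
    have : (1 + C).det = ∏ i, (1 + μ i) := by
      rw [key, det_mul, det_mul, mul_right_comm, ← det_mul, hUU, det_one, one_mul,
        ← Matrix.diagonal_one, Matrix.diagonal_add, det_diagonal]
      simp [RCLike.ofReal_real_eq_id]
    rw [← this, hdet1]
  have hμ0 : ∀ i, μ i = 0 := by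
    intro i
    by_contra hne
    have hpos : 0 < μ i := lt_of_le_of_ne (hC.eigenvalues_nonneg i) (Ne.symm hne)
    have hlt : (1 : ℝ) < ∏ j, (1 + μ j) := by
      calc (1 : ℝ) = ∏ _j : Fin d, (1 : ℝ) := by simp
        _ < ∏ j, (1 + μ j) := by
          refine Finset.prod_lt_prod (by simp) (fun j _ => ?_) ⟨i, Finset.mem_univ i, by linarith⟩
          linarith [hC.eigenvalues_nonneg j]
    rw [hprod] at hlt
    exact lt_irrefl _ hlt
  have hC0 : C = 0 := by
    have hz : diagonal (RCLike.ofReal ∘ μ) = (0 : Matrix (Fin d) (Fin d) ℝ) := by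
      ext i j
      rcases eq_or_ne i j with h | h <;> simp [Matrix.diagonal, h, hμ0]
    rw [hCspec, hz, mul_zero, zero_mul]
  rw [← hconj, hC0, mul_zero, zero_mul]
end

section
/- Under model identifiability (F_{w₁}(Z) = F_{w₂}(Z) almost surely implies w₁ = w₂), the function w ↦ log det Γ(w), where Γ(w) = E[(Y − F_w(Z))(Y − F_w(Z))ᵀ], attains its strict global minimum uniquely at w = w⁰, provided Γ₀ = Γ(w⁰) = E[εεᵀ] is positive definite. -/
open MeasureTheory ProbabilityTheory

lemma aux_det_lt {n : Type*} [Fintype n] [DecidableEq n] {A B : Matrix n n ℝ}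
    (hA : A.PosDef) (hB : B.PosSemidef) (hBne : B ≠ 0) : A.det < (A + B).det := by
  have hAs := hA.posSemidef
  set S := (open scoped MatrixOrder in CFC.sqrt A) with hSdef
  have hSps : S.PosSemidef := by open scoped MatrixOrder in exact Matrix.nonneg_iff_posSemidef.mp (CFC.sqrt_nonneg A)
  have hSS : S * S = A := by open scoped MatrixOrder in exact CFC.sqrt_mul_sqrt_self A hAs.nonneg
  have hdetA : 0 < A.det := hA.det_pos
  have hdetS : S.det ≠ 0 := by
    intro h
    rw [← hSS, Matrix.det_mul, h, mul_zero] at hdetA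
    exact lt_irrefl 0 hdetA
  have hSunit : IsUnit S.det := isUnit_iff_ne_zero.mpr hdetS
  have hSinv : S * S⁻¹ = 1 := Matrix.mul_nonsing_inv S hSunit
  have hSinv' : S⁻¹ * S = 1 := Matrix.nonsing_inv_mul S hSunit
  set M := S⁻¹ * B * S⁻¹ with hMdef
  have hSH : S.conjTranspose = S := hSps.isHermitian
  have hSinvH : (S⁻¹).conjTranspose = S⁻¹ := by rw [Matrix.conjTranspose_nonsing_inv, hSH]
  have hM : M.PosSemidef := by
    have := hB.conjTranspose_mul_mul_same (B := S⁻¹)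
    rwa [hSinvH] at this
  have hSMS : S * M * S = B := by
    have h1 : S * (S⁻¹ * B * S⁻¹) * S = (S * S⁻¹) * B * (S⁻¹ * S) := by
      simp only [Matrix.mul_assoc]
    rw [hMdef, h1, hSinv, hSinv', Matrix.one_mul, Matrix.mul_one]
  have hABdecomp : A + B = S * (1 + M) * S := by
    rw [Matrix.mul_add, Matrix.add_mul, Matrix.mul_one, hSS, hSMS]
  have hMH : M.IsHermitian := hM.isHermitian
  have hev : ∀ i, 0 ≤ hMH.eigenvalues i := hM.eigenvalues_nonneg
  have hMne : M ≠ 0 := by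
    intro h
    apply hBne
    rw [← hSMS, h, Matrix.mul_zero, Matrix.zero_mul]
  set U : Matrix n n ℝ := (hMH.eigenvectorUnitary : Matrix n n ℝ) with hUdef
  have hUU : U * star U = 1 :=
    (Matrix.mem_unitaryGroup_iff).mp (hMH.eigenvectorUnitary).2
  have hspec : M = U * Matrix.diagonal hMH.eigenvalues * star U := by
    have := hMH.spectral_theorem
    simpa [hUdef] using this
  have hex : ∃ i, hMH.eigenvalues i ≠ 0 := by
    by_contra h
    push_neg at h
    apply hMne
    rw [hspec]
    have : Matrix.diagonal hMH.eigenvalues = 0 := by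
      ext i j; by_cases hij : i = j <;> simp [Matrix.diagonal, hij, h]
    rw [this, Matrix.mul_zero, Matrix.zero_mul]
  have h1M : (1 : Matrix n n ℝ) + M
      = U * Matrix.diagonal (fun i => 1 + hMH.eigenvalues i) * star U := by
    have hdiag : Matrix.diagonal (fun i => 1 + hMH.eigenvalues i)
        = 1 + Matrix.diagonal hMH.eigenvalues := by
      rw [← Matrix.diagonal_one, Matrix.diagonal_add]
    rw [hdiag, Matrix.mul_add, Matrix.add_mul, Matrix.mul_one, hUU, ← hspec]
  have hdet1M : (1 + M).det = ∏ i, (1 + hMH.eigenvalues i) := by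
    rw [h1M, Matrix.det_mul_right_comm, hUU, Matrix.one_mul, Matrix.det_diagonal]
  have hprod : 1 < ∏ i, (1 + hMH.eigenvalues i) := by
    obtain ⟨i0, hi0⟩ := hex
    have hpos : 0 < hMH.eigenvalues i0 := lt_of_le_of_ne (hev i0) (Ne.symm hi0)
    calc (1 : ℝ) = ∏ _i : n, (1 : ℝ) := by simp
    _ < ∏ i, (1 + hMH.eigenvalues i) := by
        refine Finset.prod_lt_prod (fun i _ => one_pos) (fun i _ => ?_) ⟨i0, Finset.mem_univ i0, by linarith⟩
        linarith [hev i]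
  have hdetfinal : (A + B).det = A.det * (1 + M).det := by
    rw [hABdecomp, Matrix.det_mul, Matrix.det_mul, ← hSS, Matrix.det_mul]
    ring
  rw [hdetfinal, hdet1M]
  nlinarith [hdetA, hprod]

section helpers

variable {Ω : Type*} [MeasureSpace Ω] {P : Measure Ω} [IsProbabilityMeasure P]

lemma aux_mul_integrable {f g : Ω → ℝ} (hf : MemLp f 2 P) (hg : MemLp g 2 P) :
    Integrable (fun ω => f ω * g ω) P := by
  have h : MemLp (g • f) 1 P := MemLp.smul (r := 1) hf hg
  have := h.integrable le_rfl
  exact (by simpa [Pi.smul_apply, smul_eq_mul, mul_comm] using this : Integrable (f * g) P)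

lemma aux_proj_memLp {d : ℕ} {f : Ω → Fin d → ℝ} (hf : MemLp f 2 P) (i : Fin d) :
    MemLp (fun ω => f ω i) 2 P := by
  have h := (ContinuousLinearMap.proj (R := ℝ) (φ := fun _ : Fin d => ℝ) i).comp_memLp' hf
  exact h

end helpers

/-- Lemma 1: under identifiability, the function `w ↦ log det Γ(w)`, with
`Γ(w) = E[(Y − F_w(Z))(Y − F_w(Z))ᵀ]`, attains its strict global minimum uniquely at
`w = w⁰`, provided `Γ₀ = Γ(w⁰)` is positive definite. -/
theorem log_det_cov_unique_min {Ω : Type*} [MeasureSpace Ω]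
    (P : Measure Ω) [IsProbabilityMeasure P] {d d' K : ℕ}
    (W : Set (Fin K → ℝ)) (w0 : Fin K → ℝ) (hw0 : w0 ∈ W)
    (F : (Fin K → ℝ) → (Fin d' → ℝ) → Fin d → ℝ)
    (hFmeas : ∀ w, Measurable (F w))
    (Y : Ω → Fin d → ℝ) (Z : Ω → Fin d' → ℝ) (hY : Measurable Y) (hZ : Measurable Z)
    (hYL2 : MemLp Y 2 P) (hFL2 : ∀ w ∈ W, MemLp (fun ω => F w (Z ω)) 2 P)
    -- the noise ε = Y − F_{w⁰}(Z) is centered and independent of Z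
    (hcent : ∫ ω, (Y ω - F w0 (Z ω)) ∂P = 0)
    (hindep : IndepFun (fun ω => Y ω - F w0 (Z ω)) Z P)
    -- Γ(w) and the identifiability assumption
    (Γ : (Fin K → ℝ) → Matrix (Fin d) (Fin d) ℝ)
    (hΓ : ∀ w, Γ w = Matrix.of fun i j =>
      ∫ ω, (Y ω i - F w (Z ω) i) * (Y ω j - F w (Z ω) j) ∂P)
    (hident : ∀ w1 ∈ W, ∀ w2 ∈ W,
      (∀ᵐ ω ∂P, F w1 (Z ω) = F w2 (Z ω)) → w1 = w2)
    (hΓ0 : (Γ w0).PosDef) :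
    ∀ w ∈ W, w ≠ w0 → Real.log (Γ w0).det < Real.log (Γ w).det := by
  intro w hw hne
  have hf0L2 : MemLp (fun ω => F w0 (Z ω)) 2 P := hFL2 w0 hw0
  have hfwL2 : MemLp (fun ω => F w (Z ω)) 2 P := hFL2 w hw
  -- component L2 facts
  have hεL2 : ∀ i, MemLp (fun ω => Y ω i - F w0 (Z ω) i) 2 P := by
    intro i
    have := aux_proj_memLp (hYL2.sub hf0L2) i
    simpa using this
  have hΔL2 : ∀ i, MemLp (fun ω => F w0 (Z ω) i - F w (Z ω) i) 2 P := by
    intro i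
    have := aux_proj_memLp (hf0L2.sub hfwL2) i
    simpa using this
  -- measurability of components
  have hεmeas : ∀ i, Measurable (fun ω => Y ω i - F w0 (Z ω) i) := fun i =>
    ((measurable_pi_apply i).comp hY).sub
      ((measurable_pi_apply i).comp ((hFmeas w0).comp hZ))
  have hΔmeas : ∀ i, Measurable (fun ω => F w0 (Z ω) i - F w (Z ω) i) := fun i =>
    ((measurable_pi_apply i).comp ((hFmeas w0).comp hZ)).sub
      ((measurable_pi_apply i).comp ((hFmeas w).comp hZ))
  -- the noise is centered componentwise
  have hε0 : ∀ i, ∫ ω, (Y ω i - F w0 (Z ω) i) ∂P = 0 := by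
    intro i
    have hint : Integrable (fun ω => Y ω - F w0 (Z ω)) P :=
      (hYL2.sub hf0L2).integrable one_le_two
    have h := (ContinuousLinearMap.proj (R := ℝ) (φ := fun _ : Fin d => ℝ) i).integral_comp_comm hint
    rw [hcent] at h
    simpa using h
  -- cross terms vanish
  have hcross : ∀ i j, ∫ ω, (Y ω i - F w0 (Z ω) i) * (F w0 (Z ω) j - F w (Z ω) j) ∂P = 0 := by
    intro i j
    have hψ : Measurable (fun v : Fin d' → ℝ => F w0 v j - F w v j) :=
      ((measurable_pi_apply j).comp (hFmeas w0)).sub ((measurable_pi_apply j).comp (hFmeas w))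
    have hind2 : IndepFun (fun ω => Y ω i - F w0 (Z ω) i)
        (fun ω => F w0 (Z ω) j - F w (Z ω) j) P := by
      have := hindep.comp (measurable_pi_apply i) hψ
      exact this
    have h : ∫ ω, (Y ω i - F w0 (Z ω) i) * (F w0 (Z ω) j - F w (Z ω) j) ∂P
        = (∫ ω, (Y ω i - F w0 (Z ω) i) ∂P) * ∫ ω, (F w0 (Z ω) j - F w (Z ω) j) ∂P :=
      hind2.integral_mul_eq_mul_integral (hεmeas i).aestronglyMeasurable (hΔmeas j).aestronglyMeasurable
    rw [h, hε0 i, zero_mul]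
  -- the excess matrix D
  set D : Matrix (Fin d) (Fin d) ℝ := Matrix.of fun i j =>
    ∫ ω, (F w0 (Z ω) i - F w (Z ω) i) * (F w0 (Z ω) j - F w (Z ω) j) ∂P with hDdef
  -- decomposition Γ w = Γ w0 + D
  have hΓdecomp : Γ w = Γ w0 + D := by
    ext i j
    rw [hΓ w, hΓ w0]
    simp only [Matrix.add_apply, Matrix.of_apply, hDdef]
    have I1 := aux_mul_integrable (hεL2 i) (hεL2 j)
    have I2 := aux_mul_integrable (hεL2 i) (hΔL2 j)
    have I3 := aux_mul_integrable (hεL2 j) (hΔL2 i)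
    have I4 := aux_mul_integrable (hΔL2 i) (hΔL2 j)
    have hptwise : ∀ ω, (Y ω i - F w (Z ω) i) * (Y ω j - F w (Z ω) j)
        = (Y ω i - F w0 (Z ω) i) * (Y ω j - F w0 (Z ω) j)
          + (Y ω i - F w0 (Z ω) i) * (F w0 (Z ω) j - F w (Z ω) j)
          + (Y ω j - F w0 (Z ω) j) * (F w0 (Z ω) i - F w (Z ω) i)
          + (F w0 (Z ω) i - F w (Z ω) i) * (F w0 (Z ω) j - F w (Z ω) j) := by
      intro ω; ring
    calc ∫ ω, (Y ω i - F w (Z ω) i) * (Y ω j - F w (Z ω) j) ∂P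
        = ∫ ω, ((Y ω i - F w0 (Z ω) i) * (Y ω j - F w0 (Z ω) j)
          + (Y ω i - F w0 (Z ω) i) * (F w0 (Z ω) j - F w (Z ω) j)
          + (Y ω j - F w0 (Z ω) j) * (F w0 (Z ω) i - F w (Z ω) i)
          + (F w0 (Z ω) i - F w (Z ω) i) * (F w0 (Z ω) j - F w (Z ω) j)) ∂P := by
          exact integral_congr_ae (Filter.Eventually.of_forall hptwise)
      _ = ∫ ω, (Y ω i - F w0 (Z ω) i) * (Y ω j - F w0 (Z ω) j) ∂P
          + ∫ ω, (F w0 (Z ω) i - F w (Z ω) i) * (F w0 (Z ω) j - F w (Z ω) j) ∂P := by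
          have J12 : Integrable (fun ω => (Y ω i - F w0 (Z ω) i) * (Y ω j - F w0 (Z ω) j)
              + (Y ω i - F w0 (Z ω) i) * (F w0 (Z ω) j - F w (Z ω) j)) P := I1.add I2
          have J123 : Integrable (fun ω => (Y ω i - F w0 (Z ω) i) * (Y ω j - F w0 (Z ω) j)
              + (Y ω i - F w0 (Z ω) i) * (F w0 (Z ω) j - F w (Z ω) j)
              + (Y ω j - F w0 (Z ω) j) * (F w0 (Z ω) i - F w (Z ω) i)) P := J12.add I3
          rw [integral_add J123 I4, integral_add J12 I3,
            integral_add I1 I2, hcross i j, hcross j i, add_zero, add_zero]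
  -- D is positive semidefinite
  have hD_psd : D.PosSemidef := by
    refine Matrix.PosSemidef.of_dotProduct_mulVec_nonneg ?_ ?_
    · apply Matrix.IsHermitian.ext
      intro i j
      simp only [hDdef, Matrix.of_apply, star_trivial]
      exact integral_congr_ae (Filter.Eventually.of_forall fun ω => mul_comm _ _)
    · intro x
      have key : dotProduct (star x) (D.mulVec x)
          = ∫ ω, (∑ i, x i * (F w0 (Z ω) i - F w (Z ω) i))^2 ∂P := by
        have hrhs : ∀ ω, (∑ i, x i * (F w0 (Z ω) i - F w (Z ω) i))^2
            = ∑ i, ∑ j, (x i * x j) *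
              ((F w0 (Z ω) i - F w (Z ω) i) * (F w0 (Z ω) j - F w (Z ω) j)) := by
          intro ω
          rw [sq, Finset.sum_mul_sum]
          exact Finset.sum_congr rfl fun i _ => Finset.sum_congr rfl fun j _ => by ring
        rw [integral_congr_ae (Filter.Eventually.of_forall hrhs)]
        rw [integral_finset_sum _ (fun i _ => integrable_finset_sum _ (fun j _ =>
          (aux_mul_integrable (hΔL2 i) (hΔL2 j)).const_mul _))]
        have : ∀ i, (∫ ω, ∑ j, (x i * x j) *
              ((F w0 (Z ω) i - F w (Z ω) i) * (F w0 (Z ω) j - F w (Z ω) j)) ∂P)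
            = ∑ j, (x i * x j) * D i j := by
          intro i
          rw [integral_finset_sum _ (fun j _ =>
            (aux_mul_integrable (hΔL2 i) (hΔL2 j)).const_mul _)]
          exact Finset.sum_congr rfl fun j _ => integral_const_mul _ _
        rw [Finset.sum_congr rfl fun i _ => this i]
        simp only [dotProduct, Matrix.mulVec, star_trivial, Pi.star_apply]
        refine Finset.sum_congr rfl fun i _ => ?_
        rw [Finset.mul_sum]
        exact Finset.sum_congr rfl fun j _ => by ring
      rw [key]
      exact integral_nonneg fun ω => sq_nonneg _
  -- D is nonzero
  have hnae : ¬ (∀ᵐ ω ∂P, F w (Z ω) = F w0 (Z ω)) := fun h => hne (hident w hw w0 hw0 h)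
  have hexi : ∃ i, ¬ ((fun ω => F w0 (Z ω) i - F w (Z ω) i) =ᵐ[P] 0) := by
    by_contra h
    push_neg at h
    apply hnae
    have hall : ∀ᵐ ω ∂P, ∀ i, F w0 (Z ω) i - F w (Z ω) i = 0 :=
      (ae_all_iff).mpr fun i => h i
    filter_upwards [hall] with ω hω
    funext i
    have := hω i
    linarith
  obtain ⟨i0, hi0⟩ := hexi
  have hDii : 0 < D i0 i0 := by
    have hint := aux_mul_integrable (hΔL2 i0) (hΔL2 i0)
    have hnn : 0 ≤ D i0 i0 := integral_nonneg fun ω => mul_self_nonneg _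
    rcases hnn.lt_or_eq with h | h
    · exact h
    · exfalso
      apply hi0
      have hz : ∫ ω, (F w0 (Z ω) i0 - F w (Z ω) i0) * (F w0 (Z ω) i0 - F w (Z ω) i0) ∂P = 0 :=
        h.symm
      have := (integral_eq_zero_iff_of_nonneg (fun ω => mul_self_nonneg _) hint).mp hz
      filter_upwards [this] with ω hω
      have : (F w0 (Z ω) i0 - F w (Z ω) i0) * (F w0 (Z ω) i0 - F w (Z ω) i0) = 0 := hω
      exact mul_self_eq_zero.mp this
  have hDne : D ≠ 0 := by
    intro h
    rw [h] at hDii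
    simp at hDii
  rw [hΓdecomp]
  exact Real.log_lt_log hΓ0.det_pos (aux_det_lt hΓ0 hD_psd hDne)
end
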